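/- Let A be an affine space (over a field F) defined intrinsically via a heap operation ⟨-,-,-⟩ and an action λ ▷_a b satisfying the affine space axioms, and fix o ∈ A. Then A with addition a + b := ⟨a,o,b⟩ and scalar multiplication λ·a := λ ▷_o a is a vector space over F with zero vector o. -/
import Mathlib


/-- An intrinsic affine space over a field `F`: a set with an abelian heap
operation `t` and scaled actions `act λ a b = λ ▷_a b` satisfying the axioms
of Brzeziński–Papworth. -/
structure AffSp (F : Type*) [Field F] (A : Type*) where
  t : A → A → A → A
  act : F → A → A → A
  t_assoc : ∀ a b c d e : A, t (t a b c) d e = t a b (t c d e)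
  t_malcev : ∀ a b : A, t a a b = b
  t_symm : ∀ a b c : A, t a b c = t c b a
  act_heap1 : ∀ (l m n : F) (a b : A),
    act (l - m + n) a b = t (act l a b) (act m a b) (act n a b)
  act_heap2 : ∀ (l : F) (a b c d : A),
    act l a (t b c d) = t (act l a b) (act l a c) (act l a d)
  act_mul : ∀ (l m : F) (a b : A), act (l * m) a b = act l a (act m a b)
  act_one : ∀ a b : A, act 1 a b = b
  act_zero : ∀ a b : A, act 0 a b = a
  base_change : ∀ (l : F) (a b c : A), act l a b = t (act l c b) (act l c a) a

/-- For an intrinsic affine space `A` over `F` and any `o ∈ A`, the operations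
`a + b := ⟨a,o,b⟩` and `λ • a := λ ▷_o a` make `A` a vector space over `F`
with zero vector `o`. -/
theorem intrinsic_affine_space_retract_is_vector_space
    {F A : Type*} [Field F] (S : AffSp F A) (o : A) :
    let add : A → A → A := fun a b => S.t a o b
    let neg : A → A := fun a => S.t o a o
    let smul : F → A → A := fun l a => S.act l o a
    -- abelian group axioms with zero vector `o`
    (∀ a b c : A, add (add a b) c = add a (add b c)) ∧
    (∀ a b : A, add a b = add b a) ∧
    (∀ a : A, add o a = a) ∧
    (∀ a : A, add a (neg a) = o) ∧
    -- module axioms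
    (∀ (l : F) (a b : A), smul l (add a b) = add (smul l a) (smul l b)) ∧
    (∀ (l m : F) (a : A), smul (l + m) a = add (smul l a) (smul m a)) ∧
    (∀ (l m : F) (a : A), smul (l * m) a = smul l (smul m a)) ∧
    (∀ a : A, smul 1 a = a) ∧
    (∀ a : A, smul 0 a = o) ∧
    (∀ l : F, smul l o = o) := by
  intro add neg smul
  have acto : ∀ l : F, S.act l o o = o := by
    intro l
    have h := S.act_mul l 0 o o
    rw [mul_zero, S.act_zero] at h
    exact h.symm
  refine ⟨fun a b c => S.t_assoc a o b o c, ?_, fun a => S.t_malcev o a,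
    ?_, ?_, ?_, fun l m a => S.act_mul l m o a, fun a => S.act_one o a,
    fun a => S.act_zero o a, acto⟩
  · intro a b; exact S.t_symm a o b
  · intro a
    show S.t a o (S.t o a o) = o
    rw [← S.t_assoc, S.t_symm a o o, S.t_malcev, S.t_malcev]
  · intro l a b
    show S.act l o (S.t a o b) = S.t (S.act l o a) o (S.act l o b)
    rw [S.act_heap2, acto]
  · intro l m a
    show S.act (l + m) o a = S.t (S.act l o a) o (S.act m o a)
    have : l + m = l - 0 + m := by ring
    rw [this, S.act_heap1, S.act_zero]
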